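/- arXiv:1804.00269 — 3 statements merged into one kernel-verified Lean document; each statement's English description precedes it below -/
import Mathlib

section
/- Let Q be a quandle with operation ◁, let G = Inn(Q) be the group generated by the maps (• ◁ y) for y ∈ Q, acting on Q on the right, and fix x₀ ∈ Q. Equip G with the quandle operation g ◁ h := z₀⁻¹ g h⁻¹ z₀ h where z₀ = (• ◁ x₀). Then the map G → Q sending g to x₀ · g is a quandle homomorphism. -/
/-- For a quandle `Q` with inner automorphism group `G = Inn(Q)` (generated by the right
translations `S y = (· ◁ y)`, acting on `Q` on the right, so that `x · g := g x` and the
product `g ⊛ h` is "`g` then `h`", i.e. `h * g` in `Equiv.Perm Q`), the evaluation map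
`g ↦ x₀ · g` is a quandle homomorphism from `G` with `g ◁ h := z₀⁻¹ ⊛ g ⊛ h⁻¹ ⊛ z₀ ⊛ h`
(`z₀ = S x₀`) to `Q`; in Lean's multiplication convention `g ◁ h = h * z₀ * h⁻¹ * g * z₀⁻¹`. -/
theorem stmt2 {Q : Type*} (op : Q → Q → Q) (S : Q → Equiv.Perm Q)
    (hS : ∀ y x, S y x = op x y)
    (q1 : ∀ x, op x x = x)
    (q3 : ∀ x y z, op (op x y) z = op (op x z) (op y z))
    (x₀ : Q) (g h : Equiv.Perm Q)
    (hg : g ∈ Subgroup.closure (Set.range S))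
    (hh : h ∈ Subgroup.closure (Set.range S)) :
    (h * S x₀ * h⁻¹ * g * (S x₀)⁻¹) x₀ = op (g x₀) (h x₀) := by
  have key : ∀ f ∈ Subgroup.closure (Set.range S), ∀ a b, f (op a b) = op (f a) (f b) := by
    intro f hf
    induction hf using Subgroup.closure_induction with
    | mem z hz =>
      obtain ⟨y, rfl⟩ := hz
      intro a b
      simp only [hS]
      exact q3 a b y
    | one => intro a b; rfl
    | mul x y _ _ hx hy => intro a b; simp [Equiv.Perm.mul_apply, hx, hy]
    | inv x _ hx =>
      intro a b
      have := hx (x⁻¹ a) (x⁻¹ b)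
      simp at this
      rw [← this]; simp
  have hx0 : (S x₀)⁻¹ x₀ = x₀ := (S x₀).injective (by rw [← Equiv.Perm.mul_apply, mul_inv_cancel, Equiv.Perm.one_apply, hS, q1])
  simp only [Equiv.Perm.mul_apply, hx0]
  rw [hS, key h hh]
  simp
end

section
/- The sphere S^m ⊂ ℝ^{m+1} with the antipodal-reflection quandle operation x ◁ y := 2⟨x,y⟩y − x is semi-homogeneous of level 2: for each a ∈ S^m, letting q = −a and O_a = {x ∈ S^m : ⟨x, a⟩ = 0} (the equator), the map x ↦ a ◁ x restricts to a 2-to-1 surjection S^m \ O_a → S^m \ {q}. -/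
/-- The sphere `S^m` with `x ◁ y := 2⟨x,y⟩y − x` is semi-homogeneous of level 2: for each
unit vector `a`, every point `b` of `S^m ∖ {−a}` has exactly two preimages in
`S^m ∖ {equator of a}` under `x ↦ a ◁ x = 2⟨a,x⟩x − a`. -/
theorem stmt10 (m : ℕ) (a b : EuclideanSpace ℝ (Fin (m + 1)))
    (ha : ‖a‖ = 1) (hb : ‖b‖ = 1) (hab : b ≠ -a) :
    Nat.card {x : EuclideanSpace ℝ (Fin (m + 1)) //
      ‖x‖ = 1 ∧ (inner ℝ x a : ℝ) ≠ 0 ∧ (2 * (inner ℝ a x : ℝ)) • x - a = b} = 2 := by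
  have hab0 : a + b ≠ 0 := by
    intro h
    exact hab (by linear_combination (norm := module) h)
  set r := ‖a + b‖ with hr_def
  have hr0 : 0 < r := norm_pos_iff.mpr hab0
  have hinner : (inner ℝ a b : ℝ) = r ^ 2 / 2 - 1 := by
    have h := norm_add_sq_real a b
    rw [ha, hb] at h
    nlinarith [h]
  set c := r⁻¹ • (a + b) with hc
  have hac : (inner ℝ a c : ℝ) = r / 2 := by
    rw [hc, real_inner_smul_right, inner_add_right, real_inner_self_eq_norm_sq, ha, hinner]
    field_simp
    ring
  have hnc : ‖c‖ = 1 := by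
    rw [hc, norm_smul, norm_inv, norm_norm, ← hr_def, inv_mul_cancel₀ hr0.ne']
  have key : {x : EuclideanSpace ℝ (Fin (m + 1)) |
      ‖x‖ = 1 ∧ (inner ℝ x a : ℝ) ≠ 0 ∧ (2 * (inner ℝ a x : ℝ)) • x - a = b} = {c, -c} := by
    ext x
    simp only [Set.mem_setOf_eq, Set.mem_insert_iff, Set.mem_singleton_iff]
    constructor
    · rintro ⟨h1, h2, h3⟩
      set t : ℝ := inner ℝ a x with ht
      have ht0 : t ≠ 0 := by rw [ht, real_inner_comm]; exact h2
      have h4 : (2 * t) • x = a + b := by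
        have := sub_eq_iff_eq_add.mp h3
        rw [this]; abel
      have h5 : x = (2 * t)⁻¹ • (a + b) := by
        rw [← h4, smul_smul, inv_mul_cancel₀ (by simpa using ht0), one_smul]
      have h6 : |2 * t| = r := by
        have := congrArg norm h4
        rwa [norm_smul, h1, mul_one, Real.norm_eq_abs] at this
      rcases (abs_eq hr0.le).mp h6 with h7 | h7
      · left; rw [h5, h7]
      · right; rw [h5, h7, hc, inv_neg, neg_smul]
    · have hcase : ∀ y : EuclideanSpace ℝ (Fin (m + 1)), y = c ∨ y = -c →
          ‖y‖ = 1 ∧ (inner ℝ y a : ℝ) ≠ 0 ∧ (2 * (inner ℝ a y : ℝ)) • y - a = b := by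
        rintro y (rfl | rfl)
        · refine ⟨hnc, ?_, ?_⟩
          · rw [real_inner_comm, hac]
            positivity
          · rw [hac, hc, smul_smul]
            have : 2 * (r / 2) * r⁻¹ = 1 := by field_simp
            rw [this, one_smul, add_sub_cancel_left]
        · have hacn : (inner ℝ a (-c) : ℝ) = -(r / 2) := by
            rw [inner_neg_right, hac]
          refine ⟨by rw [norm_neg, hnc], ?_, ?_⟩
          · rw [real_inner_comm, hacn]
            intro h
            exact hr0.ne' (by linarith)
          · rw [hacn, smul_neg, mul_neg, neg_smul, neg_neg, hc, smul_smul]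
            have : 2 * (r / 2) * r⁻¹ = 1 := by field_simp
            rw [this, one_smul, add_sub_cancel_left]
      exact hcase x
  have hcne : c ≠ -c := by
    intro h
    have hc0 : c = 0 := by
      have h2 := eq_neg_iff_add_eq_zero.mp h
      have h3 : (2 : ℝ) • c = 0 := by rw [two_smul]; exact h2
      simpa using (smul_eq_zero.mp h3).resolve_left (by norm_num)
    rw [hc0, norm_zero] at hnc
    exact one_ne_zero hnc.symm
  have : Nat.card {x : EuclideanSpace ℝ (Fin (m + 1)) //
      ‖x‖ = 1 ∧ (inner ℝ x a : ℝ) ≠ 0 ∧ (2 * (inner ℝ a x : ℝ)) • x - a = b} =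
      Set.ncard {x : EuclideanSpace ℝ (Fin (m + 1)) |
      ‖x‖ = 1 ∧ (inner ℝ x a : ℝ) ≠ 0 ∧ (2 * (inner ℝ a x : ℝ)) • x - a = b} :=
    (Nat.card_coe_set_eq _)
  rw [this, key, Set.ncard_pair hcne]
end

section
/- The map 𝒞 : (ℝ²)² → ℝ sending ((x₁,y₁),(x₂,y₂)) to x₁y₂ − x₂y₁ is a rack 2-cocycle for the quandle Q = ℝ² with x ◁ y = 2y − x; that is, for all a, b, c ∈ ℝ²: 𝒞(a, c) − 𝒞(a ◁ b, c) − 𝒞(a, b) + 𝒞(a ◁ c, b ◁ c) = 0 (the rack 2-cocycle condition), and 𝒞 is not a coboundary, i.e., there is no map f : ℝ² → ℝ with 𝒞(a,b) = f(a) − f(a ◁ b) for all a, b. -/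
/-- The quandle operation `a ◁ b = 2b − a` on `ℝ²`. -/
def dop (a b : ℝ × ℝ) : ℝ × ℝ := (2 : ℝ) • b - a

/-- The determinant form `𝒞(a, b) = a₁b₂ − b₁a₂`. -/
def dC (a b : ℝ × ℝ) : ℝ := a.1 * b.2 - b.1 * a.2

/-- `𝒞` is a rack 2-cocycle of the quandle `(ℝ², a ◁ b = 2b − a)` and is not a
coboundary. -/
theorem stmt16 :
    (∀ a b c : ℝ × ℝ,
      dC a c - dC (dop a b) c - dC a b + dC (dop a c) (dop b c) = 0) ∧
    ¬ ∃ f : ℝ × ℝ → ℝ, ∀ a b : ℝ × ℝ, dC a b = f a - f (dop a b) := by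
  constructor
  · intro a b c
    simp only [dC, dop, Prod.smul_fst, Prod.smul_snd, Prod.fst_sub, Prod.snd_sub,
      smul_eq_mul]
    ring
  · rintro ⟨f, hf⟩
    have hconst : ∀ x : ℝ × ℝ, f x = f 0 := by
      intro x
      have h := hf 0 (((1:ℝ)/2) • x)
      have hop : dop 0 (((1:ℝ)/2) • x) = x := by
        simp [dop, smul_smul]
      rw [hop] at h
      have h0 : dC 0 (((1:ℝ)/2) • x) = 0 := by simp [dC]
      rw [h0] at h
      linarith
    have h1 := hf (1, 0) (0, 1)
    rw [hconst (1,0), hconst (dop (1,0) (0,1))] at h1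
    simp [dC] at h1
end
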